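/- arXiv:1811.12655 — 2 statements merged into one kernel-verified Lean document; each statement's English description precedes it below -/
import Mathlib

section
/- If some optimal pair exists, then there exists an optimal pair (A*, U*) that is constant on level sets of the regularized virtual cost: for all indices j, k with φ_j = φ_k, one has U*_j = U*_k and A*_j = A*_k. -/
/-- Virtual cost of the uniform distribution over `{c 1, …, c n}`:
`ψ j = j·c j − (j−1)·c (j−1)`. -/
noncomputable def vc (c : ℕ → ℝ) (j : ℕ) : ℝ :=
  (j : ℝ) * c j - ((j : ℝ) - 1) * c (j - 1)

/-- `Avg(l,k) = (1/(k−l+1))·Σ_{t=l}^{k} ψ_t`. -/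
noncomputable def avg (c : ℕ → ℝ) (l k : ℕ) : ℝ :=
  (∑ t ∈ Finset.Icc l k, vc c t) / ((k : ℝ) - (l : ℝ) + 1)

/-- `ψ'_l = min_{l ≤ k ≤ n} Avg(l,k)`. -/
noncomputable def rvcAux (n : ℕ) (c : ℕ → ℝ) (l : ℕ) : ℝ :=
  sInf {x | ∃ k, l ≤ k ∧ k ≤ n ∧ x = avg c l k}

/-- Regularized virtual cost: `φ_j = max_{1 ≤ l ≤ j} ψ'_l`. -/
noncomputable def rvc (n : ℕ) (c : ℕ → ℝ) (j : ℕ) : ℝ :=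
  sSup {x | ∃ l, 1 ≤ l ∧ l ≤ j ∧ x = rvcAux n c l}

/-- A pair `(A, U)` is feasible: `0 < A_j ≤ 1`, `0 ≤ U_j ≤ 1`, the sequence
`(1−U_j)·A_j` is non-increasing, and the expected spending is within `B`. -/
def FeasPair (n : ℕ) (c : ℕ → ℝ) (B : ℝ) (A U : ℕ → ℝ) : Prop :=
  (∀ j, 1 ≤ j → j ≤ n → 0 < A j ∧ A j ≤ 1 ∧ 0 ≤ U j ∧ U j ≤ 1) ∧
    (∀ j, 1 ≤ j → j < n → (1 - U (j + 1)) * A (j + 1) ≤ (1 - U j) * A j) ∧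
    ∑ j ∈ Finset.Icc 1 n, (1 - U j) * A j * vc c j ≤ B

/-- The objective
`V(A,U) = β²·(1/n)·Σ (1−U_j)/A_j + ((1/n)·Σ U_j)²`. -/
noncomputable def objV (n : ℕ) (c : ℕ → ℝ) (β : ℝ) (A U : ℕ → ℝ) : ℝ :=
  β ^ 2 * (1 / (n : ℝ)) * (∑ j ∈ Finset.Icc 1 n, (1 - U j) / A j) +
    ((1 / (n : ℝ)) * ∑ j ∈ Finset.Icc 1 n, U j) ^ 2

/-- A feasible pair is optimal if it minimizes the objective over all
feasible pairs. -/
def OptimalPair (n : ℕ) (c : ℕ → ℝ) (B β : ℝ) (A U : ℕ → ℝ) : Prop :=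
  FeasPair n c B A U ∧
    ∀ A' U', FeasPair n c B A' U' → objV n c β A U ≤ objV n c β A' U'

lemma auxSet_eq (n : ℕ) (c : ℕ → ℝ) (l : ℕ) :
    {x | ∃ k, l ≤ k ∧ k ≤ n ∧ x = avg c l k} = (fun k => avg c l k) '' (Set.Icc l n) := by
  ext x
  simp only [Set.mem_setOf_eq, Set.mem_image, Set.mem_Icc]
  constructor
  · rintro ⟨k, h1, h2, h3⟩; exact ⟨k, ⟨h1, h2⟩, h3.symm⟩
  · rintro ⟨k, ⟨h1, h2⟩, h3⟩; exact ⟨k, h1, h2, h3.symm⟩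

lemma auxSet_fin (n : ℕ) (c : ℕ → ℝ) (l : ℕ) :
    {x | ∃ k, l ≤ k ∧ k ≤ n ∧ x = avg c l k}.Finite := by
  rw [auxSet_eq]; exact (Set.finite_Icc l n).image _

lemma rvcAux_le (n : ℕ) (c : ℕ → ℝ) {l k : ℕ} (h1 : l ≤ k) (h2 : k ≤ n) :
    rvcAux n c l ≤ avg c l k :=
  csInf_le (auxSet_fin n c l).bddBelow ⟨k, h1, h2, rfl⟩

lemma rvcAux_mem (n : ℕ) (c : ℕ → ℝ) {l : ℕ} (h : l ≤ n) :
    ∃ k, l ≤ k ∧ k ≤ n ∧ rvcAux n c l = avg c l k := by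
  have hne : {x | ∃ k, l ≤ k ∧ k ≤ n ∧ x = avg c l k}.Nonempty := ⟨avg c l l, l, le_refl l, h, rfl⟩
  exact hne.csInf_mem (auxSet_fin n c l)

lemma rvcSet_eq (n : ℕ) (c : ℕ → ℝ) (j : ℕ) :
    {x | ∃ l, 1 ≤ l ∧ l ≤ j ∧ x = rvcAux n c l} = (fun l => rvcAux n c l) '' (Set.Icc 1 j) := by
  ext x
  simp only [Set.mem_setOf_eq, Set.mem_image, Set.mem_Icc]
  constructor
  · rintro ⟨k, h1, h2, h3⟩; exact ⟨k, ⟨h1, h2⟩, h3.symm⟩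
  · rintro ⟨k, ⟨h1, h2⟩, h3⟩; exact ⟨k, h1, h2, h3.symm⟩

lemma rvcSet_fin (n : ℕ) (c : ℕ → ℝ) (j : ℕ) :
    {x | ∃ l, 1 ≤ l ∧ l ≤ j ∧ x = rvcAux n c l}.Finite := by
  rw [rvcSet_eq]; exact (Set.finite_Icc 1 j).image _

lemma le_rvc (n : ℕ) (c : ℕ → ℝ) {l j : ℕ} (h1 : 1 ≤ l) (h2 : l ≤ j) :
    rvcAux n c l ≤ rvc n c j :=
  le_csSup (rvcSet_fin n c j).bddAbove ⟨l, h1, h2, rfl⟩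

lemma rvc_mem (n : ℕ) (c : ℕ → ℝ) {j : ℕ} (h : 1 ≤ j) :
    ∃ l, 1 ≤ l ∧ l ≤ j ∧ rvc n c j = rvcAux n c l := by
  have hne : {x | ∃ l', 1 ≤ l' ∧ l' ≤ j ∧ x = rvcAux n c l'}.Nonempty := ⟨rvcAux n c 1, 1, le_refl 1, h, rfl⟩
  exact hne.csSup_mem (rvcSet_fin n c j)

lemma rvc_mono (n : ℕ) (c : ℕ → ℝ) {j k : ℕ} (h1 : 1 ≤ j) (h2 : j ≤ k) :
    rvc n c j ≤ rvc n c k := by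
  apply csSup_le_csSup (rvcSet_fin n c k).bddAbove
  · exact ⟨rvcAux n c 1, 1, le_refl 1, h1, rfl⟩
  · rintro x ⟨l, hl1, hl2, hl3⟩; exact ⟨l, hl1, hl2.trans h2, hl3⟩

lemma sum_Icc_split (f : ℕ → ℝ) {a m k : ℕ} (h1 : 1 ≤ a) (h2 : a ≤ m + 1) (h3 : m ≤ k) :
    (∑ t ∈ Finset.Icc a m, f t) + ∑ t ∈ Finset.Icc (m + 1) k, f t = ∑ t ∈ Finset.Icc a k, f t := by
  have ha : a - 1 + 1 = a := Nat.succ_pred_eq_of_pos h1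
  have h2' : a - 1 ≤ m := by omega
  rw [← ha, Finset.Icc_add_one_left_eq_Ioc, Finset.Icc_add_one_left_eq_Ioc, Finset.Icc_add_one_left_eq_Ioc]
  exact Finset.sum_Ioc_consecutive f h2' h3

/-- Key level-set lemma. -/
lemma key_lemma (n : ℕ) (c : ℕ → ℝ) {a b : ℕ} (ha : 1 ≤ a) (hab : a ≤ b) (hbn : b ≤ n)
    (hconst : rvc n c a = rvc n c b)
    (hleft : a = 1 ∨ rvc n c (a - 1) ≠ rvc n c a)
    (hright : b = n ∨ rvc n c b ≠ rvc n c (b + 1)) :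
    (∀ m, a ≤ m → m ≤ n →
      ((m : ℝ) - (a : ℝ) + 1) * rvc n c a ≤ ∑ t ∈ Finset.Icc a m, vc c t) ∧
    (∑ t ∈ Finset.Icc a b, vc c t = ((b : ℝ) - (a : ℝ) + 1) * rvc n c a) := by
  set v := rvc n c a with hv
  have han : a ≤ n := hab.trans hbn
  -- Step A : rvcAux a = v
  have hva : rvcAux n c a = v := by
    obtain ⟨l, hl1, hl2, hl3⟩ := rvc_mem n c ha
    rcases eq_or_lt_of_le hl2 with h | h
    · subst h; exact hl3.symm
    · exfalso
      have ha2 : 2 ≤ a := by omega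
      have h1 : rvcAux n c l ≤ rvc n c (a - 1) := le_rvc n c hl1 (by omega)
      have h2 : rvc n c (a - 1) ≤ rvc n c a := rvc_mono n c (by omega) (by omega)
      have h3 : rvc n c (a - 1) = rvc n c a := le_antisymm h2 (by rw [hl3]; exact h1)
      rcases hleft with h4 | h4
      · omega
      · exact h4 h3
  -- Step B : min property
  have hmin : ∀ m, a ≤ m → m ≤ n →
      ((m : ℝ) - (a : ℝ) + 1) * v ≤ ∑ t ∈ Finset.Icc a m, vc c t := by
    intro m h1 h2
    have hd : (0 : ℝ) < (m : ℝ) - (a : ℝ) + 1 := by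
      have : (a : ℝ) ≤ m := Nat.cast_le.mpr h1
      linarith
    have := rvcAux_le n c h1 h2
    rw [hva] at this
    unfold avg at this
    rw [le_div_iff₀ hd] at this
    linarith [this]
  -- the minimizer set
  set K : Finset ℕ := (Finset.Icc a n).filter
    (fun k => (∑ t ∈ Finset.Icc a k, vc c t) = ((k : ℝ) - (a : ℝ) + 1) * v) with hK
  have hKne : K.Nonempty := by
    obtain ⟨k0, h1, h2, h3⟩ := rvcAux_mem n c han
    have hd : (0 : ℝ) < (k0 : ℝ) - (a : ℝ) + 1 := by
      have : (a : ℝ) ≤ k0 := Nat.cast_le.mpr h1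
      linarith
    refine ⟨k0, Finset.mem_filter.mpr ⟨Finset.mem_Icc.mpr ⟨h1, h2⟩, ?_⟩⟩
    rw [hva] at h3
    unfold avg at h3
    field_simp at h3
    linarith [h3]
  set ks := K.max' hKne with hks
  have hksK : ks ∈ K := K.max'_mem hKne
  have hks1 : a ≤ ks ∧ ks ≤ n := Finset.mem_Icc.mp (Finset.mem_filter.mp hksK).1
  have hksS : (∑ t ∈ Finset.Icc a ks, vc c t) = ((ks : ℝ) - (a : ℝ) + 1) * v :=
    (Finset.mem_filter.mp hksK).2
  have hstrict : ∀ k, ks < k → k ≤ n →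
      ((k : ℝ) - (a : ℝ) + 1) * v < ∑ t ∈ Finset.Icc a k, vc c t := by
    intro k h1 h2
    have hak : a ≤ k := hks1.1.trans h1.le
    have hle := hmin k hak h2
    rcases eq_or_lt_of_le hle with h | h
    · exfalso
      have : k ∈ K := Finset.mem_filter.mpr ⟨Finset.mem_Icc.mpr ⟨hak, h2⟩, h.symm⟩
      exact absurd (K.le_max' k this) (by omega)
    · exact h
  -- Step D : b ≤ ks
  have hbks : b ≤ ks := by
    by_contra hcon
    push_neg at hcon
    have hks1n : ks + 1 ≤ n := by omega
    have h1 : rvc n c (ks + 1) ≤ rvc n c b := rvc_mono n c (by omega) (by omega)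
    obtain ⟨k, hk1, hk2, hk3⟩ := rvcAux_mem n c hks1n
    have hkk : ks < k := by omega
    have hsplit := sum_Icc_split (vc c) ha (by omega : a ≤ ks + 1) (by omega : ks ≤ k)
    have hnum : ((k : ℝ) - (ks : ℝ)) * v < ∑ t ∈ Finset.Icc (ks + 1) k, vc c t := by
      have h5 := hstrict k hkk hk2
      have hr : ((k:ℝ)-(a:ℝ)+1)*v = ((ks:ℝ)-(a:ℝ)+1)*v + ((k:ℝ)-(ks:ℝ))*v := by ring
      linarith [hsplit, hksS, h5, hr]
    have hd : (0 : ℝ) < (k : ℝ) - ((ks : ℕ) + 1 : ℕ) + 1 := by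
      push_cast
      have : ((ks : ℝ)) + 1 ≤ (k : ℝ) := by exact_mod_cast hkk
      linarith
    have havg : v < avg c (ks + 1) k := by
      unfold avg
      rw [lt_div_iff₀ hd]
      push_cast
      push_cast at hnum
      linarith
    have h2 : avg c (ks + 1) k ≤ rvc n c (ks + 1) := hk3 ▸ le_rvc n c (by omega) le_rfl
    have : avg c (ks + 1) k ≤ v := by
      calc avg c (ks + 1) k ≤ rvc n c (ks + 1) := h2
        _ ≤ rvc n c b := h1
        _ = v := hconst.symm
    linarith
  -- Step E : ks ≤ b
  have hksb : ks ≤ b := by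
    rcases hright with h | h
    · omega
    by_contra hcon
    push_neg at hcon
    have hb1 : rvc n c b < rvc n c (b + 1) :=
      lt_of_le_of_ne (rvc_mono n c (by omega) (by omega)) h
    have h1 : rvc n c (b + 1) ≤ rvc n c ks := rvc_mono n c (by omega) (by omega)
    -- show rvc ks ≤ v
    have h2 : rvc n c ks ≤ v := by
      obtain ⟨l, hl1, hl2, hl3⟩ := rvc_mem n c (le_trans ha hks1.1)
      rw [hl3]
      rcases le_or_gt l a with hla | hla
      · exact le_rvc n c hl1 hla
      · have hd : (0 : ℝ) < (ks : ℝ) - (l : ℝ) + 1 := by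
          have : (l : ℝ) ≤ ks := Nat.cast_le.mpr hl2
          linarith
        have havg : avg c l ks ≤ v := by
          have hsplit := sum_Icc_split (vc c) ha (by omega) (by omega : l - 1 ≤ ks)
          have hlow := hmin (l - 1) (by omega) (by omega)
          have hcast : ((l - 1 : ℕ) : ℝ) = (l : ℝ) - 1 := by
            have : 1 ≤ l := by omega
            push_cast [this]
            ring
          rw [hcast] at hlow
          have hsum : (∑ t ∈ Finset.Icc (l - 1 + 1) ks, vc c t) ≤ ((ks : ℝ) - (l : ℝ) + 1) * v := by
            have hr : ((ks:ℝ)-(a:ℝ)+1)*v = (((l:ℝ)-1)-(a:ℝ)+1)*v + ((ks:ℝ)-(l:ℝ)+1)*v := by ring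
            linarith [hsplit, hksS, hlow, hr]
          have hl1' : l - 1 + 1 = l := by omega
          rw [hl1'] at hsum
          unfold avg
          rw [div_le_iff₀ hd]
          linarith
        calc rvcAux n c l ≤ avg c l ks := rvcAux_le n c hl2 hks1.2
          _ ≤ v := havg
    have hvv : v < v := by
      calc v = rvc n c b := hconst
        _ < rvc n c (b + 1) := hb1
        _ ≤ rvc n c ks := h1
        _ ≤ v := h2
    exact absurd hvv (lt_irrefl _)
  have hkb : ks = b := le_antisymm hksb hbks
  refine ⟨hmin, ?_⟩
  rw [← hkb]
  exact hksS

/-! ### Level sets -/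

noncomputable def levSet (n : ℕ) (c : ℕ → ℝ) (j : ℕ) : Finset ℕ :=
  (Finset.Icc 1 n).filter (fun m => rvc n c m = rvc n c j)

lemma mem_levSet {n : ℕ} {c : ℕ → ℝ} {j m : ℕ} :
    m ∈ levSet n c j ↔ 1 ≤ m ∧ m ≤ n ∧ rvc n c m = rvc n c j := by
  simp [levSet, Finset.mem_filter, Finset.mem_Icc, and_assoc]

lemma levSet_self {n : ℕ} {c : ℕ → ℝ} {j : ℕ} (h1 : 1 ≤ j) (h2 : j ≤ n) :
    j ∈ levSet n c j := mem_levSet.mpr ⟨h1, h2, rfl⟩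

lemma levSet_congr {n : ℕ} {c : ℕ → ℝ} {j k : ℕ} (h : rvc n c j = rvc n c k) :
    levSet n c j = levSet n c k := by
  unfold levSet; rw [h]

lemma levSet_congr_of_mem {n : ℕ} {c : ℕ → ℝ} {j t : ℕ} (h : t ∈ levSet n c j) :
    levSet n c t = levSet n c j :=
  levSet_congr (mem_levSet.mp h).2.2

lemma block_facts (n : ℕ) (c : ℕ → ℝ) {j : ℕ} (hj1 : 1 ≤ j) (hjn : j ≤ n) :
    ∃ a b, 1 ≤ a ∧ a ≤ j ∧ j ≤ b ∧ b ≤ n ∧ levSet n c j = Finset.Icc a b ∧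
      (∀ m, a ≤ m → m ≤ n →
        ((m : ℝ) - (a : ℝ) + 1) * rvc n c j ≤ ∑ t ∈ Finset.Icc a m, vc c t) ∧
      (∑ t ∈ Finset.Icc a b, vc c t = ((b : ℝ) - (a : ℝ) + 1) * rvc n c j) := by
  have hne : (levSet n c j).Nonempty := ⟨j, levSet_self hj1 hjn⟩
  set a := (levSet n c j).min' hne with hadef
  set b := (levSet n c j).max' hne with hbdef
  have hamem := (levSet n c j).min'_mem hne
  have hbmem := (levSet n c j).max'_mem hne
  obtain ⟨ha1, han, harvc⟩ := mem_levSet.mp hamem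
  obtain ⟨hb1, hbn, hbrvc⟩ := mem_levSet.mp hbmem
  have haj : a ≤ j := (levSet n c j).min'_le j (levSet_self hj1 hjn)
  have hjb : j ≤ b := (levSet n c j).le_max' j (levSet_self hj1 hjn)
  have hIcc : levSet n c j = Finset.Icc a b := by
    apply Finset.ext
    intro m
    rw [Finset.mem_Icc]
    constructor
    · intro hm
      exact ⟨(levSet n c j).min'_le m hm, (levSet n c j).le_max' m hm⟩
    · rintro ⟨h1, h2⟩
      have hm1 : 1 ≤ m := ha1.trans h1
      have hmn : m ≤ n := h2.trans hbn
      have e1 : rvc n c a ≤ rvc n c m := rvc_mono n c ha1 h1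
      have e2 : rvc n c m ≤ rvc n c b := rvc_mono n c hm1 h2
      rw [harvc] at e1
      rw [hbrvc] at e2
      exact mem_levSet.mpr ⟨hm1, hmn, le_antisymm e2 e1⟩
  have hleft : a = 1 ∨ rvc n c (a - 1) ≠ rvc n c a := by
    rcases Nat.eq_or_lt_of_le ha1 with h | h
    · exact Or.inl h.symm
    · refine Or.inr fun hcon => ?_
      have : a - 1 ∈ levSet n c j := by
        refine mem_levSet.mpr ⟨by omega, by omega, ?_⟩
        rw [hcon, harvc]
      have := (levSet n c j).min'_le _ this
      omega
  have hright : b = n ∨ rvc n c b ≠ rvc n c (b + 1) := by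
    rcases Nat.eq_or_lt_of_le hbn with h | h
    · exact Or.inl h
    · refine Or.inr fun hcon => ?_
      have : b + 1 ∈ levSet n c j := by
        refine mem_levSet.mpr ⟨by omega, by omega, ?_⟩
        rw [← hcon, hbrvc]
      have := (levSet n c j).le_max' _ this
      omega
  have hconst : rvc n c a = rvc n c b := by rw [harvc, hbrvc]
  obtain ⟨k1, k2⟩ := key_lemma n c ha1 (haj.trans hjb) hbn hconst hleft hright
  rw [harvc] at k1 k2
  exact ⟨a, b, ha1, haj, hjb, hbn, hIcc, k1, k2⟩

/-! ### The averaged pair -/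

noncomputable def barU (n : ℕ) (c : ℕ → ℝ) (U : ℕ → ℝ) (j : ℕ) : ℝ :=
  (∑ t ∈ levSet n c j, U t) / (levSet n c j).card

noncomputable def barX (n : ℕ) (c : ℕ → ℝ) (A U : ℕ → ℝ) (j : ℕ) : ℝ :=
  (∑ t ∈ levSet n c j, (1 - U t) * A t) / (levSet n c j).card

noncomputable def newA (n : ℕ) (c : ℕ → ℝ) (A U : ℕ → ℝ) (j : ℕ) : ℝ :=
  if barU n c U j = 1 then 1 else barX n c A U j / (1 - barU n c U j)

lemma barU_congr {n : ℕ} {c : ℕ → ℝ} (U : ℕ → ℝ) {j k : ℕ} (h : levSet n c j = levSet n c k) :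
    barU n c U j = barU n c U k := by unfold barU; rw [h]

lemma barX_congr {n : ℕ} {c : ℕ → ℝ} (A U : ℕ → ℝ) {j k : ℕ}
    (h : levSet n c j = levSet n c k) :
    barX n c A U j = barX n c A U k := by unfold barX; rw [h]

lemma newA_congr {n : ℕ} {c : ℕ → ℝ} (A U : ℕ → ℝ) {j k : ℕ}
    (h : levSet n c j = levSet n c k) :
    newA n c A U j = newA n c A U k := by
  unfold newA; rw [barU_congr U h, barX_congr A U h]

section Main

variable {n : ℕ} {c : ℕ → ℝ} {B : ℝ} {A U : ℕ → ℝ}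

lemma card_pos' {j : ℕ} (hj1 : 1 ≤ j) (hjn : j ≤ n) :
    (0 : ℝ) < ((levSet n c j).card : ℝ) := by
  have : (levSet n c j).Nonempty := ⟨j, levSet_self hj1 hjn⟩
  exact_mod_cast Finset.card_pos.mpr this

variable (hb : ∀ j, 1 ≤ j → j ≤ n → 0 < A j ∧ A j ≤ 1 ∧ 0 ≤ U j ∧ U j ≤ 1)

include hb

lemma barU_bounds {j : ℕ} (hj1 : 1 ≤ j) (hjn : j ≤ n) :
    0 ≤ barU n c U j ∧ barU n c U j ≤ 1 := by
  have hcard := card_pos' (c := c) hj1 hjn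
  constructor
  · unfold barU
    apply div_nonneg _ hcard.le
    apply Finset.sum_nonneg
    intro t ht
    obtain ⟨h1, h2, _⟩ := mem_levSet.mp ht
    exact (hb t h1 h2).2.2.1
  · unfold barU
    rw [div_le_one hcard]
    calc ∑ t ∈ levSet n c j, U t ≤ ∑ t ∈ levSet n c j, 1 := by
          apply Finset.sum_le_sum
          intro t ht
          obtain ⟨h1, h2, _⟩ := mem_levSet.mp ht
          exact (hb t h1 h2).2.2.2
      _ = ((levSet n c j).card : ℝ) := by simp

lemma barU_eq_one {j : ℕ} (hj1 : 1 ≤ j) (hjn : j ≤ n) (h : barU n c U j = 1) :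
    ∀ t ∈ levSet n c j, U t = 1 := by
  have hcard := card_pos' (c := c) hj1 hjn
  have hsum : ∑ t ∈ levSet n c j, (1 - U t) = 0 := by
    have : ∑ t ∈ levSet n c j, U t = ((levSet n c j).card : ℝ) := by
      unfold barU at h
      field_simp at h
      linarith [h]
    rw [Finset.sum_sub_distrib]
    simp [this]
  have := (Finset.sum_eq_zero_iff_of_nonneg ?_).mp hsum
  · intro t ht
    have := this t ht
    linarith
  · intro t ht
    obtain ⟨h1, h2, _⟩ := mem_levSet.mp ht
    linarith [(hb t h1 h2).2.2.2]

lemma barX_nonneg {j : ℕ} (hj1 : 1 ≤ j) (hjn : j ≤ n) : 0 ≤ barX n c A U j := by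
  apply div_nonneg _ (card_pos' (c := c) hj1 hjn).le
  apply Finset.sum_nonneg
  intro t ht
  obtain ⟨h1, h2, _⟩ := mem_levSet.mp ht
  obtain ⟨hA0, hA1, hU0, hU1⟩ := hb t h1 h2
  exact mul_nonneg (by linarith) hA0.le

lemma barX_le {j : ℕ} (hj1 : 1 ≤ j) (hjn : j ≤ n) :
    barX n c A U j ≤ 1 - barU n c U j := by
  have hcard := card_pos' (c := c) hj1 hjn
  unfold barX barU
  rw [div_le_iff₀ hcard, sub_mul, one_mul, div_mul_cancel₀ _ hcard.ne']
  have : ∑ t ∈ levSet n c j, (1 - U t) * A t ≤ ∑ t ∈ levSet n c j, (1 - U t) := by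
    apply Finset.sum_le_sum
    intro t ht
    obtain ⟨h1, h2, _⟩ := mem_levSet.mp ht
    obtain ⟨hA0, hA1, hU0, hU1⟩ := hb t h1 h2
    nlinarith
  rw [Finset.sum_sub_distrib] at this
  simpa using this

lemma barX_pos {j : ℕ} (hj1 : 1 ≤ j) (hjn : j ≤ n) (h : barU n c U j ≠ 1) :
    0 < barX n c A U j := by
  have hcard := card_pos' (c := c) hj1 hjn
  have hUlt : barU n c U j < 1 := lt_of_le_of_ne (barU_bounds (c := c) hb hj1 hjn).2 h
  have hex : ∃ t ∈ levSet n c j, U t < 1 := by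
    by_contra hcon
    push_neg at hcon
    have hge : ((levSet n c j).card : ℝ) ≤ ∑ t ∈ levSet n c j, U t := by
      calc ((levSet n c j).card : ℝ) = ∑ t ∈ levSet n c j, (1 : ℝ) := by simp
        _ ≤ ∑ t ∈ levSet n c j, U t := Finset.sum_le_sum (fun t ht => hcon t ht)
    have : (1 : ℝ) ≤ barU n c U j := by
      unfold barU
      rw [le_div_iff₀ hcard, one_mul]
      exact hge
    linarith
  obtain ⟨t0, ht0, hUt0⟩ := hex
  unfold barX
  apply div_pos _ hcard
  apply Finset.sum_pos'
  · intro t ht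
    obtain ⟨h1, h2, _⟩ := mem_levSet.mp ht
    obtain ⟨hA0, hA1, hU0', hU1'⟩ := hb t h1 h2
    exact mul_nonneg (by linarith) hA0.le
  · refine ⟨t0, ht0, ?_⟩
    obtain ⟨h1, h2, _⟩ := mem_levSet.mp ht0
    obtain ⟨hA0, _, _, _⟩ := hb t0 h1 h2
    exact mul_pos (by linarith) hA0

lemma newA_bounds {j : ℕ} (hj1 : 1 ≤ j) (hjn : j ≤ n) :
    0 < newA n c A U j ∧ newA n c A U j ≤ 1 := by
  unfold newA
  by_cases h : barU n c U j = 1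
  · simp [h]
  · simp only [h, if_false]
    have hU1 := (barU_bounds (c := c) hb hj1 hjn).2
    have hUlt : barU n c U j < 1 := lt_of_le_of_ne hU1 h
    have h1U : (0 : ℝ) < 1 - barU n c U j := by linarith
    constructor
    · exact div_pos (barX_pos hb hj1 hjn h) h1U
    · rw [div_le_one h1U]
      exact barX_le hb hj1 hjn

lemma newX_eq {j : ℕ} (hj1 : 1 ≤ j) (hjn : j ≤ n) :
    (1 - barU n c U j) * newA n c A U j = barX n c A U j := by
  unfold newA
  by_cases h : barU n c U j = 1
  · simp only [h, if_true, mul_one, sub_self]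
    have hall := barU_eq_one hb hj1 hjn h
    have : barX n c A U j = 0 := by
      unfold barX
      rw [Finset.sum_eq_zero, zero_div]
      intro t ht
      rw [hall t ht]
      ring
    rw [this]
  · simp only [h, if_false]
    have hU1 := (barU_bounds (c := c) hb hj1 hjn).2
    have hUlt : barU n c U j < 1 := lt_of_le_of_ne hU1 h
    rw [mul_div_assoc', mul_comm, mul_div_assoc, div_self (by linarith : (1 : ℝ) - barU n c U j ≠ 0), mul_one]

end Main

/-! ### Abel summation on a block -/

lemma abel_block (x ψ : ℕ → ℝ) (v : ℝ) {a b : ℕ} (hab : a ≤ b)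
    (hlow : ∀ m, a ≤ m → m ≤ b →
      ((m : ℝ) - (a : ℝ) + 1) * v ≤ ∑ t ∈ Finset.Icc a m, ψ t)
    (heq : ∑ t ∈ Finset.Icc a b, ψ t = ((b : ℝ) - (a : ℝ) + 1) * v)
    (hmono : ∀ m, a ≤ m → m < b → x (m + 1) ≤ x m)
    (hnn : ∀ m, a ≤ m → m ≤ b → 0 ≤ x m) :
    v * ∑ t ∈ Finset.Icc a b, x t ≤ ∑ t ∈ Finset.Icc a b, x t * ψ t := by
  have main : ∀ m, a ≤ m → m ≤ b →
      x m * ((∑ t ∈ Finset.Icc a m, ψ t) - ((m : ℝ) - (a : ℝ) + 1) * v) ≤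
        (∑ t ∈ Finset.Icc a m, x t * ψ t) - v * ∑ t ∈ Finset.Icc a m, x t := by
    intro m ham
    induction m, ham using Nat.le_induction with
    | base =>
      intro _
      simp only [Finset.Icc_self, Finset.sum_singleton]
      ring_nf
      exact le_refl _
    | succ m hm ih =>
      intro hmb
      have hmb' : m ≤ b := by omega
      have hmb'' : m < b := by omega
      have IH := ih hmb'
      have hsplit1 : ∑ t ∈ Finset.Icc a (m + 1), ψ t
          = (∑ t ∈ Finset.Icc a m, ψ t) + ψ (m + 1) :=
        Finset.sum_Icc_succ_top (by omega) ψ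
      have hsplit2 : ∑ t ∈ Finset.Icc a (m + 1), x t * ψ t
          = (∑ t ∈ Finset.Icc a m, x t * ψ t) + x (m + 1) * ψ (m + 1) :=
        Finset.sum_Icc_succ_top (by omega) _
      have hsplit3 : ∑ t ∈ Finset.Icc a (m + 1), x t
          = (∑ t ∈ Finset.Icc a m, x t) + x (m + 1) :=
        Finset.sum_Icc_succ_top (by omega) x
      have hP : 0 ≤ (∑ t ∈ Finset.Icc a m, ψ t) - ((m : ℝ) - (a : ℝ) + 1) * v := by
        have := hlow m hm hmb'
        linarith
      have hxm : x (m + 1) ≤ x m := hmono m hm hmb''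
      have hkey : x (m + 1) * ((∑ t ∈ Finset.Icc a m, ψ t) - ((m : ℝ) - (a : ℝ) + 1) * v)
          ≤ x m * ((∑ t ∈ Finset.Icc a m, ψ t) - ((m : ℝ) - (a : ℝ) + 1) * v) :=
        mul_le_mul_of_nonneg_right hxm hP
      rw [hsplit1, hsplit2, hsplit3]
      push_cast
      nlinarith [hkey, IH]
  have hb' := main b hab le_rfl
  rw [heq] at hb'
  simpa using hb'

/-! ### Monotonicity of x and barX -/

section Main2

variable {n : ℕ} {c : ℕ → ℝ} {B : ℝ} {A U : ℕ → ℝ}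

lemma x_antitone (hmon : ∀ j, 1 ≤ j → j < n → (1 - U (j + 1)) * A (j + 1) ≤ (1 - U j) * A j)
    {p q : ℕ} (hp : 1 ≤ p) (hpq : p ≤ q) (hq : q ≤ n) :
    (1 - U q) * A q ≤ (1 - U p) * A p := by
  induction q, hpq using Nat.le_induction with
  | base => exact le_refl _
  | succ q hq' ih =>
    have h1 : q ≤ n := by omega
    have h2 : 1 ≤ q := by omega
    have h3 : q < n := by omega
    exact le_trans (hmon q h2 h3) (ih h1)

lemma barX_le_x (hb : ∀ j, 1 ≤ j → j ≤ n → 0 < A j ∧ A j ≤ 1 ∧ 0 ≤ U j ∧ U j ≤ 1)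
    (hmon : ∀ j, 1 ≤ j → j < n → (1 - U (j + 1)) * A (j + 1) ≤ (1 - U j) * A j)
    {j a b : ℕ} (ha1 : 1 ≤ a) (hbn : b ≤ n) (hIcc : levSet n c j = Finset.Icc a b)
    (hj1 : 1 ≤ j) (hjn : j ≤ n) :
    (1 - U b) * A b ≤ barX n c A U j ∧ barX n c A U j ≤ (1 - U a) * A a := by
  have hcard := card_pos' (c := c) hj1 hjn
  have hcard' : (levSet n c j).card = b + 1 - a := by rw [hIcc, Nat.card_Icc]
  have hab : a ≤ b := by
    by_contra hcon
    have : Finset.Icc a b = ∅ := Finset.Icc_eq_empty (by omega)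
    rw [hIcc, this] at hcard
    simp at hcard
  constructor
  · unfold barX
    rw [le_div_iff₀ hcard, hIcc]
    have : ∀ t ∈ Finset.Icc a b, (1 - U b) * A b ≤ (1 - U t) * A t := by
      intro t ht
      obtain ⟨h1, h2⟩ := Finset.mem_Icc.mp ht
      exact x_antitone hmon (by omega) h2 hbn
    calc (1 - U b) * A b * ((Finset.Icc a b).card : ℝ)
        = ∑ _t ∈ Finset.Icc a b, (1 - U b) * A b := by
          rw [Finset.sum_const]; ring
      _ ≤ ∑ t ∈ Finset.Icc a b, (1 - U t) * A t := Finset.sum_le_sum this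
  · unfold barX
    rw [div_le_iff₀ hcard, hIcc]
    have : ∀ t ∈ Finset.Icc a b, (1 - U t) * A t ≤ (1 - U a) * A a := by
      intro t ht
      obtain ⟨h1, h2⟩ := Finset.mem_Icc.mp ht
      exact x_antitone hmon ha1 h1 (by omega)
    calc ∑ t ∈ Finset.Icc a b, (1 - U t) * A t
        ≤ ∑ _t ∈ Finset.Icc a b, (1 - U a) * A a := Finset.sum_le_sum this
      _ = (1 - U a) * A a * ((Finset.Icc a b).card : ℝ) := by
          rw [Finset.sum_const]; ring

lemma barX_antitone (hb : ∀ j, 1 ≤ j → j ≤ n → 0 < A j ∧ A j ≤ 1 ∧ 0 ≤ U j ∧ U j ≤ 1)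
    (hmon : ∀ j, 1 ≤ j → j < n → (1 - U (j + 1)) * A (j + 1) ≤ (1 - U j) * A j)
    {j : ℕ} (hj1 : 1 ≤ j) (hjn : j < n) :
    barX n c A U (j + 1) ≤ barX n c A U j := by
  by_cases hr : rvc n c j = rvc n c (j + 1)
  · exact le_of_eq (barX_congr A U (levSet_congr hr.symm))
  · obtain ⟨a, b, ha1, haj, hjb, hbn, hIcc, _, _⟩ := block_facts n c hj1 hjn.le
    obtain ⟨a', b', ha1', haj', hjb', hbn', hIcc', _, _⟩ :=
      block_facts n c (by omega : 1 ≤ j + 1) (by omega : j + 1 ≤ n)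
    -- b ≤ j
    have hbj : b ≤ j := by
      by_contra hcon
      push_neg at hcon
      have hbmem : b ∈ levSet n c j := by rw [hIcc]; exact Finset.mem_Icc.mpr ⟨haj.trans hjb, le_rfl⟩
      have hrb : rvc n c b = rvc n c j := (mem_levSet.mp hbmem).2.2
      have h1 : rvc n c j ≤ rvc n c (j + 1) := rvc_mono n c hj1 (by omega)
      have h2 : rvc n c (j + 1) ≤ rvc n c b := rvc_mono n c (by omega) (by omega)
      exact hr (le_antisymm h1 (by rw [← hrb]; exact h2))
    -- j + 1 ≤ a'
    have haj1 : j + 1 ≤ a' := by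
      by_contra hcon
      push_neg at hcon
      have hamem : a' ∈ levSet n c (j + 1) := by
        rw [hIcc']; exact Finset.mem_Icc.mpr ⟨le_rfl, haj'.trans hjb'⟩
      have hra : rvc n c a' = rvc n c (j + 1) := (mem_levSet.mp hamem).2.2
      have h1 : rvc n c j ≤ rvc n c (j + 1) := rvc_mono n c hj1 (by omega)
      have h2 : rvc n c a' ≤ rvc n c j := rvc_mono n c ha1' (by omega)
      exact hr (le_antisymm h1 (by rw [← hra]; exact h2))
    have hx1 := (barX_le_x (c := c) hb hmon ha1' hbn' hIcc' (by omega) (by omega)).2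
    have hx2 := (barX_le_x (c := c) hb hmon ha1 hbn hIcc hj1 hjn.le).1
    have hx3 : (1 - U a') * A a' ≤ (1 - U b) * A b :=
      x_antitone hmon (by omega) (by omega) (by omega)
    linarith

end Main2

/-! ### Blockwise comparisons -/

section Main3

variable {n : ℕ} {c : ℕ → ℝ} {B : ℝ} {A U : ℕ → ℝ}

lemma block_budget (hb : ∀ j, 1 ≤ j → j ≤ n → 0 < A j ∧ A j ≤ 1 ∧ 0 ≤ U j ∧ U j ≤ 1)
    (hmon : ∀ j, 1 ≤ j → j < n → (1 - U (j + 1)) * A (j + 1) ≤ (1 - U j) * A j)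
    {j : ℕ} (hj1 : 1 ≤ j) (hjn : j ≤ n) :
    ∑ t ∈ levSet n c j, barX n c A U j * vc c t ≤
      ∑ t ∈ levSet n c j, (1 - U t) * A t * vc c t := by
  obtain ⟨a, b, ha1, haj, hjb, hbn, hIcc, hlow, hsum⟩ := block_facts n c hj1 hjn
  have hab : a ≤ b := haj.trans hjb
  have hdpos : (0 : ℝ) < (b : ℝ) - (a : ℝ) + 1 := by
    have : (a : ℝ) ≤ b := Nat.cast_le.mpr hab
    linarith
  have hcardR : ((levSet n c j).card : ℝ) = (b : ℝ) - (a : ℝ) + 1 := by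
    rw [hIcc, Nat.card_Icc, Nat.cast_sub (by omega : a ≤ b + 1)]
    push_cast
    ring
  have hBX : barX n c A U j = (∑ t ∈ Finset.Icc a b, (1 - U t) * A t) / ((b : ℝ) - (a : ℝ) + 1) := by
    unfold barX
    rw [hIcc] at *
    rw [hcardR]
  have habel := abel_block (fun t => (1 - U t) * A t) (vc c) (rvc n c j) hab
    (fun m h1 h2 => hlow m h1 (h2.trans hbn)) hsum
    (fun m h1 h2 => hmon m (by omega) (by omega))
    (fun m h1 h2 => by
      obtain ⟨hA0, hA1, hU0, hU1⟩ := hb m (by omega) (by omega)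
      exact mul_nonneg (by linarith) hA0.le)
  rw [hIcc]
  calc ∑ t ∈ Finset.Icc a b, barX n c A U j * vc c t
      = barX n c A U j * ∑ t ∈ Finset.Icc a b, vc c t := by rw [Finset.mul_sum]
    _ = rvc n c j * ∑ t ∈ Finset.Icc a b, (1 - U t) * A t := by
        rw [hBX, hsum]
        field_simp
    _ ≤ ∑ t ∈ Finset.Icc a b, (1 - U t) * A t * vc c t := habel

lemma block_U {j : ℕ} (hj1 : 1 ≤ j) (hjn : j ≤ n) :
    ∑ _t ∈ levSet n c j, barU n c U j = ∑ t ∈ levSet n c j, U t := by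
  have hcard := card_pos' (c := c) hj1 hjn
  rw [Finset.sum_const, nsmul_eq_mul]
  unfold barU
  field_simp

lemma block_obj (hb : ∀ j, 1 ≤ j → j ≤ n → 0 < A j ∧ A j ≤ 1 ∧ 0 ≤ U j ∧ U j ≤ 1)
    {j : ℕ} (hj1 : 1 ≤ j) (hjn : j ≤ n) :
    ∑ _t ∈ levSet n c j, (1 - barU n c U j) / newA n c A U j ≤
      ∑ t ∈ levSet n c j, (1 - U t) / A t := by
  have hcard := card_pos' (c := c) hj1 hjn
  have hRHSnn : 0 ≤ ∑ t ∈ levSet n c j, (1 - U t) / A t := by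
    apply Finset.sum_nonneg
    intro t ht
    obtain ⟨h1, h2, _⟩ := mem_levSet.mp ht
    obtain ⟨hA0, hA1, hU0, hU1⟩ := hb t h1 h2
    exact div_nonneg (by linarith) hA0.le
  rw [Finset.sum_const, nsmul_eq_mul]
  by_cases h : barU n c U j = 1
  · rw [h]
    simpa using hRHSnn
  · have hUlt : barU n c U j < 1 := lt_of_le_of_ne (barU_bounds (c := c) hb hj1 hjn).2 h
    have hXpos : 0 < barX n c A U j := barX_pos hb hj1 hjn h
    have hnewA : newA n c A U j = barX n c A U j / (1 - barU n c U j) := by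
      unfold newA; rw [if_neg h]
    have hAval : (1 - barU n c U j) / newA n c A U j
        = (1 - barU n c U j) ^ 2 / barX n c A U j := by
      rw [hnewA, div_div_eq_mul_div, sq]
    rw [hAval]
    -- Cauchy-Schwarz
    have hCS : (∑ t ∈ levSet n c j, (1 - U t)) ^ 2 ≤
        (∑ t ∈ levSet n c j, (1 - U t) * A t) * ∑ t ∈ levSet n c j, (1 - U t) / A t := by
      apply Finset.sum_sq_le_sum_mul_sum_of_sq_eq_mul
      · intro t ht
        obtain ⟨h1, h2, _⟩ := mem_levSet.mp ht
        obtain ⟨hA0, hA1, hU0, hU1⟩ := hb t h1 h2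
        exact mul_nonneg (by linarith) hA0.le
      · intro t ht
        obtain ⟨h1, h2, _⟩ := mem_levSet.mp ht
        obtain ⟨hA0, hA1, hU0, hU1⟩ := hb t h1 h2
        exact div_nonneg (by linarith) hA0.le
      · intro t ht
        obtain ⟨h1, h2, _⟩ := mem_levSet.mp ht
        obtain ⟨hA0, hA1, hU0, hU1⟩ := hb t h1 h2
        field_simp
    have hs1 : ∑ t ∈ levSet n c j, (1 - U t)
        = ((levSet n c j).card : ℝ) * (1 - barU n c U j) := by
      rw [Finset.sum_sub_distrib, Finset.sum_const, nsmul_eq_mul, mul_one]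
      unfold barU
      field_simp
    have hs2 : ∑ t ∈ levSet n c j, (1 - U t) * A t
        = barX n c A U j * ((levSet n c j).card : ℝ) := by
      unfold barX
      field_simp
    rw [hs1, hs2] at hCS
    rw [mul_div_assoc', div_le_iff₀ hXpos]
    nlinarith [hCS, hcard, hXpos]

lemma sum_blocks (f g : ℕ → ℝ)
    (h : ∀ j, 1 ≤ j → j ≤ n → ∑ t ∈ levSet n c j, f t ≤ ∑ t ∈ levSet n c j, g t) :
    ∑ j ∈ Finset.Icc 1 n, f j ≤ ∑ j ∈ Finset.Icc 1 n, g j := by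
  have hmaps : ∀ x ∈ Finset.Icc 1 n, rvc n c x ∈ (Finset.Icc 1 n).image (rvc n c) :=
    fun x hx => Finset.mem_image_of_mem _ hx
  rw [← Finset.sum_fiberwise_of_maps_to hmaps f, ← Finset.sum_fiberwise_of_maps_to hmaps g]
  apply Finset.sum_le_sum
  intro y hy
  obtain ⟨j, hj, rfl⟩ := Finset.mem_image.mp hy
  obtain ⟨hj1, hjn⟩ := Finset.mem_Icc.mp hj
  exact h j hj1 hjn

end Main3

/-! ### Assembly -/

section Main4

variable {n : ℕ} {c : ℕ → ℝ} {B β : ℝ} {A U : ℕ → ℝ}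

lemma new_feas (hfeas : FeasPair n c B A U) :
    FeasPair n c B (newA n c A U) (barU n c U) := by
  obtain ⟨hb, hmon, hbud⟩ := hfeas
  refine ⟨?_, ?_, ?_⟩
  · intro j hj1 hjn
    obtain ⟨h1, h2⟩ := newA_bounds (c := c) hb hj1 hjn
    obtain ⟨h3, h4⟩ := barU_bounds (c := c) hb hj1 hjn
    exact ⟨h1, h2, h3, h4⟩
  · intro j hj1 hjn
    rw [newX_eq hb (by omega) (by omega), newX_eq hb hj1 (by omega)]
    exact barX_antitone hb hmon hj1 hjn
  · have h1 : ∑ j ∈ Finset.Icc 1 n, (1 - barU n c U j) * newA n c A U j * vc c j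
        = ∑ j ∈ Finset.Icc 1 n, barX n c A U j * vc c j := by
      apply Finset.sum_congr rfl
      intro j hj
      obtain ⟨hj1, hjn⟩ := Finset.mem_Icc.mp hj
      rw [newX_eq hb hj1 hjn]
    rw [h1]
    have h2 : ∑ j ∈ Finset.Icc 1 n, barX n c A U j * vc c j
        ≤ ∑ j ∈ Finset.Icc 1 n, (1 - U j) * A j * vc c j := by
      apply sum_blocks
      intro j hj1 hjn
      have hcongr : ∑ t ∈ levSet n c j, barX n c A U t * vc c t
          = ∑ t ∈ levSet n c j, barX n c A U j * vc c t := by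
        apply Finset.sum_congr rfl
        intro t ht
        rw [barX_congr A U (levSet_congr_of_mem ht)]
      rw [hcongr]
      exact block_budget hb hmon hj1 hjn
    exact h2.trans hbud

lemma new_obj (hβ : 0 < β) (hfeas : FeasPair n c B A U) :
    objV n c β (newA n c A U) (barU n c U) ≤ objV n c β A U := by
  obtain ⟨hb, hmon, hbud⟩ := hfeas
  have hs1 : ∑ j ∈ Finset.Icc 1 n, (1 - barU n c U j) / newA n c A U j
      ≤ ∑ j ∈ Finset.Icc 1 n, (1 - U j) / A j := by
    apply sum_blocks
    intro j hj1 hjn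
    have hcongr : ∑ t ∈ levSet n c j, (1 - barU n c U t) / newA n c A U t
        = ∑ _t ∈ levSet n c j, (1 - barU n c U j) / newA n c A U j := by
      apply Finset.sum_congr rfl
      intro t ht
      rw [barU_congr U (levSet_congr_of_mem ht), newA_congr A U (levSet_congr_of_mem ht)]
    rw [hcongr]
    exact block_obj hb hj1 hjn
  have hs2 : ∑ j ∈ Finset.Icc 1 n, barU n c U j = ∑ j ∈ Finset.Icc 1 n, U j := by
    apply le_antisymm
    · apply sum_blocks
      intro j hj1 hjn
      have hcongr : ∑ t ∈ levSet n c j, barU n c U t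
          = ∑ _t ∈ levSet n c j, barU n c U j := by
        apply Finset.sum_congr rfl
        intro t ht
        rw [barU_congr U (levSet_congr_of_mem ht)]
      rw [hcongr, block_U (U := U) hj1 hjn]
    · apply sum_blocks
      intro j hj1 hjn
      have hcongr : ∑ t ∈ levSet n c j, barU n c U t
          = ∑ _t ∈ levSet n c j, barU n c U j := by
        apply Finset.sum_congr rfl
        intro t ht
        rw [barU_congr U (levSet_congr_of_mem ht)]
      rw [hcongr, block_U (U := U) hj1 hjn]
  unfold objV
  rw [hs2]
  have hfac : (0 : ℝ) ≤ β ^ 2 * (1 / (n : ℝ)) := by positivity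
  have := mul_le_mul_of_nonneg_left hs1 hfac
  linarith

end Main4

/-- if some optimal pair exists, there is an optimal pair which
is constant on level sets of the regularized virtual cost. -/
theorem stmt16 (n : ℕ) (hn : 1 ≤ n) (c : ℕ → ℝ) (hc0 : c 0 = 0) (hc1 : 0 < c 1)
    (hmono : ∀ a b, a ≤ b → b ≤ n → c a ≤ c b)
    (B : ℝ) (hB : 0 < B) (hBle : B ≤ ∑ j ∈ Finset.Icc 1 n, vc c j)
    (β : ℝ) (hβ : 0 < β)
    (hex : ∃ A U, OptimalPair n c B β A U) :
    ∃ A U, OptimalPair n c B β A U ∧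
      ∀ j k, 1 ≤ j → j ≤ n → 1 ≤ k → k ≤ n → rvc n c j = rvc n c k →
        U j = U k ∧ A j = A k := by
  obtain ⟨A, U, hfeas, hopt⟩ := hex
  refine ⟨newA n c A U, barU n c U, ⟨new_feas hfeas, ?_⟩, ?_⟩
  · intro A' U' h'
    exact le_trans (new_obj hβ hfeas) (hopt A' U' h')
  · intro j k _ _ _ _ h
    have hls : levSet n c j = levSet n c k := levSet_congr h
    exact ⟨barU_congr U hls, newA_congr A U hls⟩
end

section
/- Let U* ∈ [0,1]^n satisfy U*_j = U*_k whenever φ_j = φ_k, let λ > 0, and define A*_j = min{1, λ/√(φ_j)}. Then replacing the virtual cost by the regularized virtual cost does not change the expected spending: Σ_{j=1}^{n} (1−U*_j)·A*_j·φ_j = Σ_{j=1}^{n} (1−U*_j)·A*_j·ψ_j. -/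
open Finset

namespace Stmt18Aux

variable (n : ℕ) (c : ℕ → ℝ)

lemma cast_den_pos {l k : ℕ} (h : l ≤ k) : (0:ℝ) < (k:ℝ) - (l:ℝ) + 1 := by
  have : (l:ℝ) ≤ (k:ℝ) := by exact_mod_cast h
  linarith

lemma avg_mul {l k : ℕ} (h : l ≤ k) :
    avg c l k * ((k:ℝ) - (l:ℝ) + 1) = ∑ t ∈ Icc l k, vc c t := by
  unfold avg
  exact div_mul_cancel₀ _ (ne_of_gt (cast_den_pos h))

lemma sum_split (f : ℕ → ℝ) {l m k : ℕ} (h1 : l ≤ m + 1) (h2 : m ≤ k) :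
    ∑ t ∈ Icc l k, f t = (∑ t ∈ Icc l m, f t) + ∑ t ∈ Icc (m+1) k, f t := by
  rw [← Finset.Ico_add_one_right_eq_Icc, ← Finset.Ico_add_one_right_eq_Icc, ← Finset.Ico_add_one_right_eq_Icc]
  exact (Finset.sum_Ico_consecutive _ h1 (by omega)).symm

lemma rvcAux_set_eq (l : ℕ) :
    {x | ∃ k, l ≤ k ∧ k ≤ n ∧ x = avg c l k} = ↑((Icc l n).image (avg c l)) := by
  ext x
  simp only [Finset.coe_image, Set.mem_image, Finset.mem_coe, Finset.mem_Icc,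
    Set.mem_setOf_eq]
  constructor
  · rintro ⟨k, h1, h2, rfl⟩; exact ⟨k, ⟨h1, h2⟩, rfl⟩
  · rintro ⟨k, ⟨h1, h2⟩, rfl⟩; exact ⟨k, h1, h2, rfl⟩

lemma image_ne {l : ℕ} (h : l ≤ n) : ((Icc l n).image (avg c l)).Nonempty :=
  Finset.Nonempty.image ⟨l, by simp [h]⟩ _

lemma rvcAux_eq_min' {l : ℕ} (h : l ≤ n) :
    rvcAux n c l = ((Icc l n).image (avg c l)).min' (image_ne n c h) := by
  rw [rvcAux, rvcAux_set_eq]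
  exact (image_ne n c h).csInf_eq_min'

lemma rvcAux_le {l k : ℕ} (h1 : l ≤ k) (h2 : k ≤ n) : rvcAux n c l ≤ avg c l k := by
  rw [rvcAux_eq_min' n c (h1.trans h2)]
  exact Finset.min'_le _ _ (Finset.mem_image_of_mem _ (by simp [h1, h2]))

lemma exists_K {l : ℕ} (h : l ≤ n) :
    ∃ k, l ≤ k ∧ k ≤ n ∧ avg c l k = rvcAux n c l ∧
      ∀ k', k < k' → k' ≤ n → rvcAux n c l < avg c l k' := by
  classical
  set T := (Icc l n).filter (fun k => avg c l k = rvcAux n c l) with hT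
  have hmem : rvcAux n c l ∈ (Icc l n).image (avg c l) := by
    rw [rvcAux_eq_min' n c h]; exact Finset.min'_mem _ _
  obtain ⟨k0, hk0, hk0e⟩ := Finset.mem_image.mp hmem
  have hTne : T.Nonempty := ⟨k0, Finset.mem_filter.mpr ⟨hk0, hk0e⟩⟩
  have hKmem := Finset.mem_filter.mp (T.max'_mem hTne)
  have hIcc := Finset.mem_Icc.mp hKmem.1
  refine ⟨T.max' hTne, hIcc.1, hIcc.2, hKmem.2, ?_⟩
  intro k' hgt hle
  have hle' : rvcAux n c l ≤ avg c l k' := rvcAux_le n c (by omega) hle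
  rcases lt_or_eq_of_le hle' with h' | h'
  · exact h'
  · exfalso
    have : k' ∈ T := Finset.mem_filter.mpr ⟨Finset.mem_Icc.mpr ⟨by omega, hle⟩, h'.symm⟩
    exact absurd (Finset.le_max' T k' this) (by omega)

lemma rvc_set_eq (j : ℕ) :
    {x | ∃ l, 1 ≤ l ∧ l ≤ j ∧ x = rvcAux n c l} = ↑((Icc 1 j).image (rvcAux n c)) := by
  ext x
  simp only [Finset.coe_image, Set.mem_image, Finset.mem_coe, Finset.mem_Icc,
    Set.mem_setOf_eq]
  constructor
  · rintro ⟨l, h1, h2, rfl⟩; exact ⟨l, ⟨h1, h2⟩, rfl⟩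
  · rintro ⟨l, ⟨h1, h2⟩, rfl⟩; exact ⟨l, h1, h2, rfl⟩

lemma rvc_image_ne {j : ℕ} (h : 1 ≤ j) : ((Icc 1 j).image (rvcAux n c)).Nonempty :=
  Finset.Nonempty.image ⟨1, by simp [h]⟩ _

lemma rvc_eq_max' {j : ℕ} (h : 1 ≤ j) :
    rvc n c j = ((Icc 1 j).image (rvcAux n c)).max' (rvc_image_ne n c h) := by
  rw [rvc, rvc_set_eq]
  exact (rvc_image_ne n c h).csSup_eq_max'

lemma le_rvc {l j : ℕ} (h1 : 1 ≤ l) (h2 : l ≤ j) : rvcAux n c l ≤ rvc n c j := by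
  rw [rvc_eq_max' n c (h1.trans h2)]
  exact Finset.le_max' _ _ (Finset.mem_image_of_mem _ (by simp [h1, h2]))

lemma rvc_le {j : ℕ} (h : 1 ≤ j) {x : ℝ}
    (hx : ∀ l, 1 ≤ l → l ≤ j → rvcAux n c l ≤ x) : rvc n c j ≤ x := by
  rw [rvc_eq_max' n c h]
  apply Finset.max'_le
  intro y hy
  obtain ⟨l, hl, rfl⟩ := Finset.mem_image.mp hy
  have := Finset.mem_Icc.mp hl
  exact hx l this.1 this.2

lemma rvc_mono {j j' : ℕ} (h1 : 1 ≤ j) (h : j ≤ j') : rvc n c j ≤ rvc n c j' :=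
  rvc_le n c h1 fun l hl1 hl2 => le_rvc n c hl1 (hl2.trans h)

/-- Within a block: if `avg(l,k)` attains the minimum `rvcAux l`, then for
`l < m ≤ k` we have `rvcAux m ≤ rvcAux l`. -/
lemma within_block {l k m : ℕ} (hlk : l ≤ k) (hkn : k ≤ n)
    (hmin : avg c l k = rvcAux n c l) (hm : l < m) (hmk : m ≤ k) :
    rvcAux n c m ≤ rvcAux n c l := by
  obtain ⟨m', rfl⟩ : ∃ m', m = m' + 1 := ⟨m - 1, by omega⟩
  have h1 : rvcAux n c (m'+1) ≤ avg c (m'+1) k := rvcAux_le n c hmk hkn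
  refine h1.trans ?_
  have hsplit : ∑ t ∈ Icc l k, vc c t
      = (∑ t ∈ Icc l m', vc c t) + ∑ t ∈ Icc (m'+1) k, vc c t :=
    sum_split _ (by omega) (by omega)
  have e1 : avg c l k * ((k:ℝ) - (l:ℝ) + 1) = ∑ t ∈ Icc l k, vc c t :=
    avg_mul c hlk
  have e2 : avg c l m' * ((m':ℝ) - (l:ℝ) + 1) = ∑ t ∈ Icc l m', vc c t :=
    avg_mul c (by omega)
  have e3 : avg c (m'+1) k * ((k:ℝ) - ((m'+1:ℕ):ℝ) + 1) = ∑ t ∈ Icc (m'+1) k, vc c t :=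
    avg_mul c (by omega)
  have hge : rvcAux n c l ≤ avg c l m' := rvcAux_le n c (by omega) (by omega)
  have hd2 : (0:ℝ) < (m':ℝ) - (l:ℝ) + 1 := cast_den_pos (by omega)
  have hd3 : (0:ℝ) < (k:ℝ) - ((m'+1:ℕ):ℝ) + 1 := cast_den_pos hmk
  have hmul : rvcAux n c l * ((m':ℝ) - (l:ℝ) + 1) ≤ ∑ t ∈ Icc l m', vc c t := by
    rw [← e2]
    exact mul_le_mul_of_nonneg_right hge hd2.le
  have e1' : rvcAux n c l * ((k:ℝ) - (l:ℝ) + 1) = ∑ t ∈ Icc l k, vc c t := by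
    rw [← hmin]; exact e1
  have hring : rvcAux n c l * ((k:ℝ) - (l:ℝ) + 1) - rvcAux n c l * ((m':ℝ) - (l:ℝ) + 1)
      = rvcAux n c l * ((k:ℝ) - ((m'+1:ℕ):ℝ) + 1) := by push_cast; ring
  have hfin : avg c (m'+1) k * ((k:ℝ) - ((m'+1:ℕ):ℝ) + 1)
      ≤ rvcAux n c l * ((k:ℝ) - ((m'+1:ℕ):ℝ) + 1) := by linarith
  exact le_of_mul_le_mul_right hfin hd3

/-- Next block's value is strictly larger. -/
lemma next_block_gt {l k : ℕ} (hlk : l ≤ k) (hkn : k < n)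
    (hmin : avg c l k = rvcAux n c l)
    (hmax : ∀ k', k < k' → k' ≤ n → rvcAux n c l < avg c l k') :
    rvcAux n c l < rvcAux n c (k+1) := by
  obtain ⟨k2, h1, h2, h3, _⟩ := exists_K n c (l := k+1) (by omega)
  rw [← h3]
  have hs : rvcAux n c l < avg c l k2 := hmax k2 (by omega) h2
  have hsplit : ∑ t ∈ Icc l k2, vc c t
      = (∑ t ∈ Icc l k, vc c t) + ∑ t ∈ Icc (k+1) k2, vc c t :=
    sum_split _ (by omega) (by omega)
  have e1 : avg c l k2 * ((k2:ℝ) - (l:ℝ) + 1) = ∑ t ∈ Icc l k2, vc c t :=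
    avg_mul c (by omega)
  have e2 : avg c l k * ((k:ℝ) - (l:ℝ) + 1) = ∑ t ∈ Icc l k, vc c t :=
    avg_mul c hlk
  have e3 : avg c (k+1) k2 * ((k2:ℝ) - ((k+1:ℕ):ℝ) + 1) = ∑ t ∈ Icc (k+1) k2, vc c t :=
    avg_mul c h1
  have hd1 : (0:ℝ) < (k2:ℝ) - (l:ℝ) + 1 := cast_den_pos (by omega)
  have hd3 : (0:ℝ) < (k2:ℝ) - ((k+1:ℕ):ℝ) + 1 := cast_den_pos h1
  have hc : ((k+1:ℕ):ℝ) = (k:ℝ) + 1 := by push_cast; ring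
  have hmul : rvcAux n c l * ((k2:ℝ) - (l:ℝ) + 1) < ∑ t ∈ Icc l k2, vc c t := by
    rw [← e1]
    exact mul_lt_mul_of_pos_right hs hd1
  have e2' : rvcAux n c l * ((k:ℝ) - (l:ℝ) + 1) = ∑ t ∈ Icc l k, vc c t := by
    rw [← hmin]; exact e2
  have hring : rvcAux n c l * ((k2:ℝ) - (l:ℝ) + 1) - rvcAux n c l * ((k:ℝ) - (l:ℝ) + 1)
      = rvcAux n c l * ((k2:ℝ) - ((k+1:ℕ):ℝ) + 1) := by push_cast; ring
  have hfin : rvcAux n c l * ((k2:ℝ) - ((k+1:ℕ):ℝ) + 1)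
      < avg c (k+1) k2 * ((k2:ℝ) - ((k+1:ℕ):ℝ) + 1) := by linarith
  exact lt_of_mul_lt_mul_right hfin hd3.le

lemma block_step {l : ℕ} (hl1 : 1 ≤ l) (hln : l ≤ n)
    (hprev : ∀ l', 1 ≤ l' → l' < l → rvcAux n c l' < rvcAux n c l)
    (hFeq : ∑ t ∈ Icc 1 (l-1), rvc n c t = ∑ t ∈ Icc 1 (l-1), vc c t) :
    ∃ k, l ≤ k ∧ k ≤ n ∧
      (∀ j, l ≤ j → j ≤ k → rvc n c j = rvcAux n c l) ∧
      (∑ t ∈ Icc 1 k, rvc n c t = ∑ t ∈ Icc 1 k, vc c t) ∧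
      (k < n → ∀ l', 1 ≤ l' → l' < k + 1 → rvcAux n c l' < rvcAux n c (k+1)) := by
  obtain ⟨k, hlk, hkn, hmin, hmax⟩ := exists_K n c hln
  have hphi : ∀ j, l ≤ j → j ≤ k → rvc n c j = rvcAux n c l := by
    intro j hj1 hj2
    apply le_antisymm
    · apply rvc_le n c (by omega)
      intro l' h1 h2
      rcases lt_trichotomy l' l with h | h | h
      · exact (hprev l' h1 h).le
      · rw [h]
      · exact within_block n c hlk hkn hmin h (by omega)
    · exact le_rvc n c hl1 hj1
  have hsum_phi :
      ∑ t ∈ Icc 1 k, rvc n c t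
        = (∑ t ∈ Icc 1 (l-1), vc c t) + ((k:ℝ) - (l:ℝ) + 1) * rvcAux n c l := by
    have hsp : ∑ t ∈ Icc 1 k, rvc n c t
        = (∑ t ∈ Icc 1 (l-1), rvc n c t) + ∑ t ∈ Icc (l-1+1) k, rvc n c t :=
      sum_split _ (by omega) (by omega)
    rw [show l-1+1 = l by omega] at hsp
    rw [hsp, hFeq]
    congr 1
    have hcst : ∀ t ∈ Icc l k, rvc n c t = rvcAux n c l := by
      intro t ht; have := Finset.mem_Icc.mp ht; exact hphi t this.1 this.2
    rw [Finset.sum_congr rfl hcst, Finset.sum_const, Nat.card_Icc, nsmul_eq_mul]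
    congr 1
    rw [Nat.cast_sub (by omega : l ≤ k + 1)]
    push_cast; ring
  have hsum_psi :
      ∑ t ∈ Icc 1 k, vc c t
        = (∑ t ∈ Icc 1 (l-1), vc c t) + ∑ t ∈ Icc l k, vc c t := by
    have := sum_split (vc c) (l := 1) (m := l-1) (k := k) (by omega) (by omega)
    rwa [show l-1+1 = l by omega] at this
  refine ⟨k, hlk, hkn, hphi, ?_, ?_⟩
  · rw [hsum_phi, hsum_psi]
    have h2 := avg_mul c hlk
    rw [hmin] at h2
    rw [mul_comm, h2]
  · intro hkn' l' h1 h2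
    have hnext : rvcAux n c l < rvcAux n c (k+1) := next_block_gt n c hlk hkn' hmin hmax
    rcases lt_trichotomy l' l with h | h | h
    · exact (hprev l' h1 h).trans hnext
    · rw [h]; exact hnext
    · exact lt_of_le_of_lt (within_block n c hlk hkn hmin h (by omega)) hnext

lemma ironing (hn : 1 ≤ n) :
    (∑ t ∈ Icc 1 n, rvc n c t = ∑ t ∈ Icc 1 n, vc c t) ∧
    (∀ j, 1 ≤ j → j < n → rvc n c j < rvc n c (j+1) →
      ∑ t ∈ Icc 1 j, rvc n c t = ∑ t ∈ Icc 1 j, vc c t) := by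
  suffices main : ∀ d l, 1 ≤ l → l ≤ n → n - l ≤ d →
      (∀ l', 1 ≤ l' → l' < l → rvcAux n c l' < rvcAux n c l) →
      (∑ t ∈ Icc 1 (l-1), rvc n c t = ∑ t ∈ Icc 1 (l-1), vc c t) →
      (∀ j, 1 ≤ j → j + 1 ≤ l →
        ∑ t ∈ Icc 1 j, rvc n c t = ∑ t ∈ Icc 1 j, vc c t ∨
          rvc n c j = rvc n c (j+1)) →
      ((∑ t ∈ Icc 1 n, rvc n c t = ∑ t ∈ Icc 1 n, vc c t) ∧
       (∀ j, 1 ≤ j → j < n → rvc n c j < rvc n c (j+1) →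
         ∑ t ∈ Icc 1 j, rvc n c t = ∑ t ∈ Icc 1 j, vc c t)) by
    apply main n 1 le_rfl hn (by omega)
    · intro l' h1 h2; omega
    · simp
    · intro j h1 h2; omega
  intro d
  induction d with
  | zero =>
    intro l h1 h2 h3 hprev hFeq hP4
    obtain ⟨k, hlk, hkn, hphi, hkeq, _⟩ := block_step n c h1 h2 hprev hFeq
    have hln : l = n := by omega
    have hk : k = n := by omega
    subst hk
    refine ⟨hkeq, ?_⟩
    intro j hj1 hj2 hlt
    rcases hP4 j hj1 (by omega) with h | h
    · exact h
    · exact absurd h (ne_of_lt hlt)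
  | succ d ih =>
    intro l h1 h2 h3 hprev hFeq hP4
    obtain ⟨k, hlk, hkn, hphi, hkeq, hnext⟩ := block_step n c h1 h2 hprev hFeq
    have hP4' : ∀ j, 1 ≤ j → j + 1 ≤ k + 1 →
        ∑ t ∈ Icc 1 j, rvc n c t = ∑ t ∈ Icc 1 j, vc c t ∨
          rvc n c j = rvc n c (j+1) := by
      intro j hj1 hj2
      rcases lt_or_ge j l with h | h
      · exact hP4 j hj1 (by omega)
      · rcases eq_or_lt_of_le (show j ≤ k by omega) with he | hlt2
        · left; rw [he]; exact hkeq
        · right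
          rw [hphi j h (by omega), hphi (j+1) (by omega) (by omega)]
    by_cases hk : k = n
    · subst hk
      refine ⟨hkeq, ?_⟩
      intro j hj1 hj2 hlt
      rcases hP4' j hj1 (by omega) with h | h
      · exact h
      · exact absurd h (ne_of_lt hlt)
    · have hkn' : k < n := by omega
      apply ih (k+1) (by omega) (by omega) (by omega) (hnext (by omega))
      · simpa using hkeq
      · exact hP4'

end Stmt18Aux


/-- for `U*` constant on level sets of `φ` and
`A*_j = min{1, λ/√φ_j}`, the expected spending computed with the regularized
virtual costs equals the one computed with the virtual costs. -/
theorem stmt18 (n : ℕ) (hn : 1 ≤ n) (c : ℕ → ℝ) (hc0 : c 0 = 0) (hc1 : 0 < c 1)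
    (hmono : ∀ a b, a ≤ b → b ≤ n → c a ≤ c b)
    (U : ℕ → ℝ) (hU : ∀ j, 1 ≤ j → j ≤ n → 0 ≤ U j ∧ U j ≤ 1)
    (hUlevel : ∀ j k, 1 ≤ j → j ≤ n → 1 ≤ k → k ≤ n →
      rvc n c j = rvc n c k → U j = U k)
    (lam : ℝ) (hlam : 0 < lam)
    (Astar : ℕ → ℝ)
    (hAstar : ∀ j, 1 ≤ j → j ≤ n → Astar j = min 1 (lam / Real.sqrt (rvc n c j))) :
    ∑ j ∈ Finset.Icc 1 n, (1 - U j) * Astar j * rvc n c j =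
      ∑ j ∈ Finset.Icc 1 n, (1 - U j) * Astar j * vc c j := by
  classical
  obtain ⟨hP3, hP4⟩ := Stmt18Aux.ironing n c hn
  set w : ℕ → ℝ := fun j => (1 - U j) * Astar j with hw
  have hw_eq : ∀ j k, 1 ≤ j → j ≤ n → 1 ≤ k → k ≤ n →
      rvc n c j = rvc n c k → w j = w k := by
    intro j k h1 h2 h3 h4 he
    simp only [hw]
    rw [hUlevel j k h1 h2 h3 h4 he, hAstar j h1 h2, hAstar k h3 h4, he]
  have key : ∀ m, 1 ≤ m → m ≤ n →
      ∑ j ∈ Finset.Icc 1 m, w j * (rvc n c j - vc c j)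
        = w m * (∑ t ∈ Finset.Icc 1 m, rvc n c t - ∑ t ∈ Finset.Icc 1 m, vc c t) := by
    intro m
    induction m with
    | zero => intro h; exact absurd h (by omega)
    | succ m ih =>
      intro h1 h2
      by_cases hm : m = 0
      · subst hm
        simp [Finset.Icc_self]
      · have hm1 : 1 ≤ m := by omega
        have hmn : m ≤ n := by omega
        have ihm := ih hm1 hmn
        rw [Finset.sum_Icc_succ_top (by omega : 1 ≤ m + 1),
            Finset.sum_Icc_succ_top (by omega : 1 ≤ m + 1),
            Finset.sum_Icc_succ_top (by omega : 1 ≤ m + 1), ihm]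
        have hmono' : rvc n c m ≤ rvc n c (m+1) :=
          Stmt18Aux.rvc_mono n c hm1 (by omega)
        rcases eq_or_lt_of_le hmono' with he | hlt
        · have hww : w m = w (m+1) := hw_eq m (m+1) hm1 hmn (by omega) h2 he
          rw [hww]; ring
        · have hD := hP4 m hm1 (by omega) hlt
          rw [hD]; ring
  have hkey := key n hn le_rfl
  rw [hP3, sub_self, mul_zero] at hkey
  have hexp : ∑ j ∈ Finset.Icc 1 n, w j * (rvc n c j - vc c j)
      = (∑ j ∈ Finset.Icc 1 n, (1 - U j) * Astar j * rvc n c j)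
        - ∑ j ∈ Finset.Icc 1 n, (1 - U j) * Astar j * vc c j := by
    rw [← Finset.sum_sub_distrib]
    apply Finset.sum_congr rfl
    intro j _
    simp only [hw]; ring
  rw [hexp] at hkey
  linarith
end
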